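/- Let W be a subspace in the big cell of the Sato Grassmannian. Then there is at most one pair (P,Q) ∈ Gr_𝒟 with P(W) ⊆ W and Q(W) ⊆ W: if (P,Q) and (P',Q') both belong to Gr_𝒟 and both stabilize W, then P = P' and Q = Q'. -/

import Mathlib

noncomputable section

/-- `H = ℂ((z⁻¹))`: formal Laurent series in `u = z⁻¹`. -/
abbrev H : Type := LaurentSeries ℂ

/-- The coefficient of `z^k` of a Laurent series in `z⁻¹`. -/
def zc (f : H) (k : ℤ) : ℂ := f.coeff (-k)

/-- `deg_z f ≤ d`: all coefficients of `z^k` with `k > d` vanish. -/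
def degLE (f : H) (d : ℤ) : Prop := ∀ k : ℤ, d < k → zc f k = 0

/-- The element `z` of `H`. -/
def zH : H := HahnSeries.single (-1 : ℤ) (1 : ℂ)

/-- Multiplication by `z` as a `ℂ`-linear endomorphism of `H`. -/
def Mz : H →ₗ[ℂ] H where
  toFun f := zH * f
  map_add' f g := mul_add zH f g
  map_smul' c f := by
    simp only [RingHom.id_apply, ← HahnSeries.single_zero_mul_eq_smul]
    ring

/-- The derivative `d/dz` as a `ℂ`-linear endomorphism of `H`. -/
def Dz : H →ₗ[ℂ] H where
  toFun f :=
    { coeff := fun n => ((1 - n : ℤ) : ℂ) * f.coeff (n - 1)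
      isPWO_support' := by
        refine Set.IsPWO.mono (Set.IsPWO.image_of_monotone f.isPWO_support'
          (f := fun m : ℤ => m + 1) (fun a b hab => by dsimp only; omega)) ?_
        intro n hn
        simp only [Function.mem_support] at hn
        refine ⟨n - 1, ?_, by ring⟩
        intro h
        exact hn (by rw [h, mul_zero]) }
  map_add' f g := by
    ext n
    simp [HahnSeries.coeff_add, mul_add]
  map_smul' c f := by
    ext n
    simp [HahnSeries.coeff_smul]
    ring

/-- `H₊ = ℂ[z]`: series with no negative powers of `z`. -/
def Hplus : Submodule ℂ H where
  carrier := {f | ∀ k : ℤ, k < 0 → zc f k = 0}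
  add_mem' := by
    intro f g hf hg k hk
    simp only [Set.mem_setOf_eq, zc, HahnSeries.coeff_add] at *
    rw [hf k hk, hg k hk, add_zero]
  zero_mem' := by intro k hk; simp [zc]
  smul_mem' := by
    intro c f hf k hk
    simp only [Set.mem_setOf_eq, zc, HahnSeries.coeff_smul] at *
    rw [hf k hk, smul_zero]

/-- `H₋ = z⁻¹ℂ[[z⁻¹]]`: series with only negative powers of `z`. -/
def Hminus : Submodule ℂ H where
  carrier := {f | ∀ k : ℤ, 0 ≤ k → zc f k = 0}
  add_mem' := by
    intro f g hf hg k hk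
    simp only [Set.mem_setOf_eq, zc, HahnSeries.coeff_add] at *
    rw [hf k hk, hg k hk, add_zero]
  zero_mem' := by intro k hk; simp [zc]
  smul_mem' := by
    intro c f hf k hk
    simp only [Set.mem_setOf_eq, zc, HahnSeries.coeff_smul] at *
    rw [hf k hk, smul_zero]

/-- The projection `π₊ : H → H₊` discarding all negative powers of `z`. -/
def piPlus : H →ₗ[ℂ] H where
  toFun f :=
    { coeff := fun n => if 0 < n then 0 else f.coeff n
      isPWO_support' := by
        refine Set.IsPWO.mono f.isPWO_support' ?_
        intro n hn
        simp only [Function.mem_support] at hn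
        by_cases h : 0 < n
        · exact absurd (if_pos h) hn
        · rw [if_neg h] at hn; exact hn }
  map_add' f g := by
    ext n
    by_cases h : 0 < n <;> simp [HahnSeries.coeff_add, h]
  map_smul' c f := by
    ext n
    by_cases h : 0 < n <;> simp [HahnSeries.coeff_smul, h]

/-- The statement that `A` is the operator `Σ_{k≥0} a_k (d/dz)^k`, where all
`deg a_k ≤ e`: partial sums converge to `A f` coefficientwise. -/
def IsOp (a : ℕ → H) (e : ℤ) (A : H →ₗ[ℂ] H) : Prop :=
  (∀ k, degLE (a k) e) ∧
  ∀ (f : H) (d : ℤ), degLE f d → ∀ N : ℕ,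
    degLE (A f - ∑ k ∈ Finset.range N, a k * ((Dz ^ k) f)) (d + e - N)

/-- The operator `A` stabilizes the subspace `W`. -/
def Stab (A : H →ₗ[ℂ] H) (W : Submodule ℂ H) : Prop := ∀ f ∈ W, A f ∈ W

/-- The big cell of the Sato Grassmannian: `π₊` restricts to a bijection of `W` onto `ℂ[z]`. -/
def BigCell (W : Submodule ℂ H) : Prop :=
  Set.BijOn piPlus (W : Set H) (Hplus : Set H)

/-- The pair `(P, Q)` belongs to `Gr_𝒟`. -/
def GrD (P Q : H →ₗ[ℂ] H) : Prop :=
  (∃ a : ℕ → H, IsOp a (-2) (P - Dz)) ∧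
  (∃ b : ℕ → H, IsOp b (-1) (Q - Mz)) ∧
  P ∘ₗ Q - Q ∘ₗ P = LinearMap.id


-- ===== auxiliary lemmas for the proof =====

lemma zc_add (f g : H) (k : ℤ) : zc (f + g) k = zc f k + zc g k := by
  simp [zc, HahnSeries.coeff_add]

lemma zc_sub (f g : H) (k : ℤ) : zc (f - g) k = zc f k - zc g k := by
  simp [zc, HahnSeries.coeff_sub]

lemma zc_sum {ι : Type} (s : Finset ι) (g : ι → H) (k : ℤ) :
    zc (∑ i ∈ s, g i) k = ∑ i ∈ s, zc (g i) k := by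
  classical
  induction s using Finset.induction_on with
  | empty => simp [zc]
  | insert _ _ h ih => rw [Finset.sum_insert h, Finset.sum_insert h, zc_add, ih]

lemma degLE_sub (f g : H) (d : ℤ) (hf : degLE f d) (hg : degLE g d) : degLE (f - g) d :=
  fun k hk => by rw [zc_sub, hf k hk, hg k hk, sub_zero]

lemma exists_degLE (f : H) : ∃ d : ℤ, degLE f d :=
  ⟨-f.order, fun k hk => HahnSeries.coeff_eq_zero_of_lt_order (by omega)⟩

lemma Dz_coeff (f : H) (n : ℤ) : (Dz f).coeff n = ((1 - n : ℤ) : ℂ) * f.coeff (n - 1) := rfl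

lemma zc_Dz (f : H) (k : ℤ) : zc (Dz f) k = ((k + 1 : ℤ) : ℂ) * zc f (k + 1) := by
  rw [zc, Dz_coeff, zc, show (1 : ℤ) - -k = k + 1 by ring, show -k - 1 = -(k+1) by ring]

lemma degLE_Dz (f : H) (d : ℤ) (hf : degLE f d) : degLE (Dz f) (d - 1) :=
  fun k hk => by rw [zc_Dz, hf (k+1) (by omega), mul_zero]

lemma degLE_Dzpow (f : H) (d : ℤ) (hf : degLE f d) (k : ℕ) : degLE ((Dz ^ k) f) (d - k) := by
  induction k with
  | zero => simpa using hf
  | succ k ih =>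
    rw [pow_succ', Module.End.mul_apply]
    have h := degLE_Dz _ _ ih
    have h2 : ((d - (k:ℤ)) - 1 : ℤ) = d - ((k:ℕ)+1 : ℕ) := by push_cast; ring
    rwa [h2] at h

def zeta (d : ℤ) : H := HahnSeries.single (-d) 1

def ffall (d : ℤ) (k : ℕ) : ℂ := ∏ i ∈ Finset.range k, ((d - i : ℤ) : ℂ)

lemma zc_zeta (d k : ℤ) : zc (zeta d) k = if k = d then 1 else 0 := by
  rw [zeta, zc]
  by_cases h : k = d
  · rw [if_pos h, h, HahnSeries.coeff_single_same]
  · rw [if_neg h, HahnSeries.coeff_single_of_ne (by omega)]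

lemma degLE_zeta (d : ℤ) : degLE (zeta d) d :=
  fun k hk => by rw [zc_zeta, if_neg (by omega)]

lemma Dz_single (d : ℤ) (c : ℂ) :
    Dz (HahnSeries.single (-d) c) = HahnSeries.single (-(d-1)) ((d:ℂ) * c) := by
  ext n
  rw [Dz_coeff]
  by_cases h : n = -(d-1)
  · rw [h, HahnSeries.coeff_single_same, show -(d-1) - 1 = -d by ring, HahnSeries.coeff_single_same]
    rw [show (1 : ℤ) - -(d-1) = d by ring]
  · rw [HahnSeries.coeff_single_of_ne h, HahnSeries.coeff_single_of_ne (by omega), mul_zero]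

lemma Dzpow_zeta (d : ℤ) (k : ℕ) :
    (Dz ^ k) (zeta d) = HahnSeries.single (-(d - k)) (ffall d k) := by
  induction k with
  | zero => simp [zeta, ffall]
  | succ k ih =>
    rw [pow_succ', Module.End.mul_apply, ih, Dz_single]
    congr 1
    · push_cast; ring
    · have hstep : ffall d (k+1) = ffall d k * ((d - (k:ℕ) : ℤ) : ℂ) :=
        Finset.prod_range_succ _ _
      rw [hstep]; push_cast; ring

lemma ffall_self_ne_zero (N : ℕ) : ffall (N:ℤ) N ≠ 0 := by
  rw [ffall]
  refine Finset.prod_ne_zero_iff.mpr fun i hi => ?_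
  rw [Finset.mem_range] at hi
  have h : ((N:ℤ) - i) ≠ 0 := by omega
  exact_mod_cast fun hc => h (by exact_mod_cast hc)

lemma ffall_eq_zero (N k : ℕ) (h : N < k) : ffall (N:ℤ) k = 0 := by
  rw [ffall]
  refine Finset.prod_eq_zero (Finset.mem_range.mpr h) ?_
  norm_num

lemma zc_mul_single (f : H) (s : ℤ) (c : ℂ) (r : ℤ) :
    zc (f * HahnSeries.single s c) r = zc f (r + s) * c := by
  have h := HahnSeries.coeff_mul_single_add (r := c) (x := f) (a := -r - s) (b := s)
  rw [show -r - s + s = -r by ring] at h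
  rw [zc, h, zc, show -(r + s) = -r - s by ring]

lemma zc_mul_eq_zero (f g : H) (dg r : ℤ) (hg : degLE g dg)
    (hf : ∀ m : ℤ, r - dg ≤ m → zc f m = 0) : zc (f * g) r = 0 := by
  rw [zc, HahnSeries.coeff_mul]
  refine Finset.sum_eq_zero fun ij hij => ?_
  rw [Finset.mem_addAntidiagonal] at hij
  obtain ⟨h1, h2, h3⟩ := hij
  by_cases hj : dg < -ij.2
  · exact absurd (by simpa [zc] using hg _ hj) h2
  · have hz : zc f (-ij.1) = 0 := hf _ (by omega)
    rw [show f.coeff ij.1 = zc f (-ij.1) by simp [zc], hz, zero_mul]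

lemma piPlus_coeff (f : H) (n : ℤ) :
    (piPlus f).coeff n = if 0 < n then 0 else f.coeff n := rfl

lemma isOp_zc {a : ℕ → H} {e : ℤ} {A : H →ₗ[ℂ] H} (hA : IsOp a e A) (f : H) (d : ℤ)
    (hf : degLE f d) (M : ℕ) (r : ℤ) (hM : d + e - M < r) :
    zc (A f) r = ∑ k ∈ Finset.range M, zc (a k * ((Dz ^ k) f)) r := by
  have h := hA.2 f d hf M r hM
  rw [zc_sub, zc_sum] at h
  exact sub_eq_zero.mp h

/-- Master coefficient formula for `A w`, `w = z^N + (negative part)`. -/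
lemma master {a : ℕ → H} {e : ℤ} {A : H →ₗ[ℂ] H} (he : e ≤ -1) (hA : IsOp a e A)
    (N : ℕ) (w : H) (hw : degLE (w - zeta (N:ℤ)) (-1))
    (M : ℕ) (r : ℤ) (hM1 : (N:ℤ) + e - M < r) (hM2 : -1 + e - (M:ℤ) < r)
    (tail : ∀ (k : ℕ) (m : ℤ), r + 1 + k ≤ m → zc (a k) m = 0) :
    zc (A w) r = ∑ k ∈ Finset.range M, ffall (N:ℤ) k * zc (a k) (r - N + k) := by
  have hsplit : A w = A (zeta (N:ℤ)) + A (w - zeta (N:ℤ)) := by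
    rw [← map_add]; congr 1; abel
  have h1 : zc (A (zeta (N:ℤ))) r
      = ∑ k ∈ Finset.range M, ffall (N:ℤ) k * zc (a k) (r - N + k) := by
    rw [isOp_zc hA (zeta (N:ℤ)) N (degLE_zeta _) M r hM1]
    refine Finset.sum_congr rfl fun k hk => ?_
    rw [Dzpow_zeta, zc_mul_single, show r + -((N:ℤ) - k) = r - N + k by ring, mul_comm]
  have h2 : zc (A (w - zeta (N:ℤ))) r = 0 := by
    rw [isOp_zc hA (w - zeta (N:ℤ)) (-1) hw M r hM2]
    refine Finset.sum_eq_zero fun k hk => ?_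
    refine zc_mul_eq_zero _ _ (-1 - k) r (by
      have := degLE_Dzpow _ _ hw k
      rwa [show (-1 : ℤ) - (k:ℕ) = -1 - (k:ℤ) by push_cast; ring] at this) ?_
    intro m hm
    exact tail k m (by omega)
  rw [hsplit, zc_add, h1, h2, add_zero]

lemma coeffs_vanish (W : Submodule ℂ H) (hW : BigCell W) (A : H →ₗ[ℂ] H) (a : ℕ → H)
    (e : ℤ) (he : e ≤ -1) (hA : IsOp a e A) (hs : Stab A W) :
    ∀ (k : ℕ) (m : ℤ), zc (a k) m = 0 := by
  have main : ∀ L : ℕ, ∀ (k : ℕ) (m : ℤ), m ≤ -1 → (k:ℤ) - m - 1 < L → zc (a k) m = 0 := by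
    intro L
    induction L with
    | zero => exact fun k m hm hL => absurd hL (by omega)
    | succ ℓ IH =>
      have inner : ∀ N : ℕ, zc (a N) ((N:ℤ) - 1 - ℓ) = 0 := by
        intro N
        induction N using Nat.strong_induction_on with
        | _ N ih =>
        by_cases hN : N ≤ ℓ
        swap
        · exact hA.1 N _ (by omega)
        obtain ⟨w, hwW, hw⟩ := hW.surjOn (show zeta (N:ℤ) ∈ (Hplus : Set H) from
          fun k hk => by rw [zc_zeta, if_neg (by omega)])
        have hh : degLE (w - zeta (N:ℤ)) (-1) := by
          intro k hk
          have hc : (piPlus w).coeff (-k) = (zeta (N:ℤ)).coeff (-k) := by rw [hw]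
          rw [piPlus_coeff, if_neg (by omega : ¬ (0:ℤ) < -k)] at hc
          rw [zc_sub, zc, zc, hc, sub_self]
        have hpos : ∀ r : ℤ, 0 ≤ r → zc (A w) r = 0 := by
          intro r hr
          rw [master he hA N w hh (N + ℓ + 1) r (by push_cast; omega) (by push_cast; omega)
            (fun k m hm => hA.1 k m (by omega))]
          refine Finset.sum_eq_zero fun k hk => ?_
          rcases le_or_gt (r - N + k) (-1) with hm | hm
          · rw [IH k _ hm (by omega), mul_zero]
          · rw [hA.1 k _ (by omega), mul_zero]
        have hAw0 : A w = 0 := by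
          refine hW.injOn (hs w hwW) W.zero_mem ?_
          rw [map_zero]
          ext n
          rw [piPlus_coeff, HahnSeries.coeff_zero]
          by_cases hn : 0 < n
          · rw [if_pos hn]
          · rw [if_neg hn]
            have := hpos (-n) (by omega)
            simpa [zc] using this
        have heq := master he hA N w hh (N + ℓ + 1) ((N:ℤ) - ℓ - 1)
          (by push_cast; omega) (by push_cast; omega)
          (fun k m hm => by
            rcases le_or_gt m (-1) with hm1 | hm1
            · exact IH k m hm1 (by omega)
            · exact hA.1 k m (by omega))
        rw [hAw0] at heq
        have hz : (0:ℂ)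
            = ∑ k ∈ Finset.range (N + ℓ + 1),
                ffall (N:ℤ) k * zc (a k) (((N:ℤ) - ℓ - 1) - N + k) := by
          rw [← heq]; simp [zc]
        rw [Finset.sum_eq_single N (fun k hk hkN => by
            rcases lt_or_gt_of_ne hkN with hlt | hgt
            · rw [show ((N:ℤ) - ℓ - 1) - N + k = (k:ℤ) - 1 - ℓ by ring, ih k hlt, mul_zero]
            · rw [ffall_eq_zero N k hgt, zero_mul])
          (fun hN' => absurd (Finset.mem_range.mpr (by omega)) hN')] at hz
        have hidx : ((N:ℤ) - ℓ - 1) - N + N = (N:ℤ) - 1 - ℓ := by ring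
        rw [hidx] at hz
        rcases mul_eq_zero.mp hz.symm with h0 | h0
        · exact absurd h0 (ffall_self_ne_zero N)
        · exact h0
      intro k m hm hlev
      rcases lt_or_ge ((k:ℤ) - m - 1) (ℓ:ℤ) with hcase | hcase
      · exact IH k m hm hcase
      · have hmeq : m = (k:ℤ) - 1 - ℓ := by omega
        rw [hmeq]; exact inner k
  intro k m
  rcases le_or_gt m (-1) with hm | hm
  · exact main ((k:ℤ) - m).toNat k m hm (by omega)
  · exact hA.1 k m (by omega)

lemma isOp_stab_eq_zero (W : Submodule ℂ H) (hW : BigCell W) (A : H →ₗ[ℂ] H) (a : ℕ → H)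
    (e : ℤ) (he : e ≤ -1) (hA : IsOp a e A) (hs : Stab A W) : A = 0 := by
  have hc := coeffs_vanish W hW A a e he hA hs
  have ha : ∀ k, a k = 0 := fun k => by
    ext n
    rw [HahnSeries.coeff_zero]
    have := hc k (-n)
    simpa [zc] using this
  apply LinearMap.ext
  intro f
  obtain ⟨d, hd⟩ := exists_degLE f
  rw [LinearMap.zero_apply]
  ext n
  rw [HahnSeries.coeff_zero]
  have hz : zc (A f) (-n) = 0 := by
    rw [isOp_zc hA f d hd (d + e + n + 1).toNat (-n) (by omega)]
    refine Finset.sum_eq_zero fun k _ => ?_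
    rw [ha k, zero_mul]
    simp [zc]
  simpa [zc] using hz

lemma isOp_sub {a a' : ℕ → H} {e : ℤ} {A A' : H →ₗ[ℂ] H}
    (hA : IsOp a e A) (hA' : IsOp a' e A') :
    IsOp (fun k => a k - a' k) e (A - A') := by
  refine ⟨fun k => degLE_sub _ _ _ (hA.1 k) (hA'.1 k), fun f d hf N => ?_⟩
  have h := degLE_sub _ _ _ (hA.2 f d hf N) (hA'.2 f d hf N)
  have heq : (A - A') f - ∑ k ∈ Finset.range N, (a k - a' k) * ((Dz ^ k) f)
      = (A f - ∑ k ∈ Finset.range N, a k * ((Dz ^ k) f))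
        - (A' f - ∑ k ∈ Finset.range N, a' k * ((Dz ^ k) f)) := by
    rw [LinearMap.sub_apply]
    simp only [sub_mul]
    rw [Finset.sum_sub_distrib]
    abel
  rwa [heq]

/-- A point of the big cell is stabilized by at most one pair in `Gr_𝒟`. -/
theorem canonical_pair_unique (W : Submodule ℂ H) (hW : BigCell W)
    (P Q P' Q' : H →ₗ[ℂ] H) (h : GrD P Q) (h' : GrD P' Q')
    (s1 : Stab P W) (s2 : Stab Q W) (s3 : Stab P' W) (s4 : Stab Q' W) :
    P = P' ∧ Q = Q' := by
  obtain ⟨⟨a, ha⟩, ⟨b, hb⟩, -⟩ := h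
  obtain ⟨⟨a', ha'⟩, ⟨b', hb'⟩, -⟩ := h'
  have hPP : (P - Dz) - (P' - Dz) = P - P' := by abel
  have hQQ : (Q - Mz) - (Q' - Mz) = Q - Q' := by abel
  have hP := isOp_sub ha ha'
  rw [hPP] at hP
  have hQ := isOp_sub hb hb'
  rw [hQQ] at hQ
  have hsP : Stab (P - P') W := fun f hf => by
    rw [LinearMap.sub_apply]; exact W.sub_mem (s1 f hf) (s3 f hf)
  have hsQ : Stab (Q - Q') W := fun f hf => by
    rw [LinearMap.sub_apply]; exact W.sub_mem (s2 f hf) (s4 f hf)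
  have h1 : P - P' = 0 := isOp_stab_eq_zero W hW _ _ (-2) (by norm_num) hP hsP
  have h2 : Q - Q' = 0 := isOp_stab_eq_zero W hW _ _ (-1) (by norm_num) hQ hsQ
  exact ⟨sub_eq_zero.mp h1, sub_eq_zero.mp h2⟩
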